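/- arXiv:1407.3914 — 4 statements merged into one kernel-verified Lean document; each statement's English description precedes it below -/
import Mathlib

section
/- Let X be a simplicial space such that p_0 is a homotopy equivalence (equivalently, X_0 is contractible) and for every m ≥ 1 the Segal map p_m : X_m → (X_1)^m is a homotopy equivalence. Fix a point x₀ ∈ X_0, set ∗ = s_0^1(x₀) ∈ X_1, choose a homotopy inverse q : X_1 × X_1 → X_2 of p_2, and define μ = d_1^2 ∘ q : X_1 × X_1 → X_1. Then X_1 is a homotopy associative H-space with multiplication μ and unit ∗: the maps x ↦ μ(x, ∗) and x ↦ μ(∗, x) are each homotopic to the identity of X_1, and μ ∘ (μ × id_{X_1}) is homotopic to μ ∘ (id_{X_1} × μ) as continuous maps X_1 × X_1 × X_1 → X_1. -/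
open CategoryTheory

/-- The `n`-th space of a simplicial space `X : SimplexCategoryᵒᵖ ⥤ TopCat`. -/
abbrev sp (X : SimplexCategoryᵒᵖ ⥤ TopCat) (n : ℕ) : TopCat :=
  X.obj (Opposite.op (SimplexCategory.mk n))

/-- The face map `d_i^{n+1} : X_{n+1} → X_n` induced by the coface `δ_i^{n+1} : [n] → [n+1]`. -/
def face (X : SimplexCategoryᵒᵖ ⥤ TopCat) {n : ℕ} (i : Fin (n + 2)) :
    C(sp X (n + 1), sp X n) :=
  (X.map (SimplexCategory.δ i).op).hom

/-- The degeneracy map `s_i^{n+1} : X_n → X_{n+1}` induced by the codegeneracy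
`σ_i^{n+1} : [n+1] → [n]`. -/
def degen (X : SimplexCategoryᵒᵖ ⥤ TopCat) {n : ℕ} (i : Fin (n + 1)) :
    C(sp X n, sp X (n + 1)) :=
  (X.map (SimplexCategory.σ i).op).hom

/-- The edge map `X(i_{j+1}) : X_m → X_1` induced by the monotone map
`ε_{j+1} : [1] → [m]` with `0 ↦ j`, `1 ↦ j+1`. -/
def edge (X : SimplexCategoryᵒᵖ ⥤ TopCat) {m : ℕ} (j : Fin m) :
    C(sp X m, sp X 1) :=
  (X.map (SimplexCategory.mkOfSucc j).op).hom

/-- The `m`-th Segal map `p_m : X_m → (X_1)^m`; for `m = 0` this is the unique map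
to the one-point space. -/
def segalPi (X : SimplexCategoryᵒᵖ ⥤ TopCat) (m : ℕ) :
    C(sp X m, Fin m → sp X 1) :=
  ⟨fun x j => edge X j x, continuous_pi fun j => (edge X j).continuous⟩

/-- The second Segal map `p_2 = ⟨X(i_1), X(i_2)⟩ : X_2 → X_1 × X_1`. -/
def segal2 (X : SimplexCategoryᵒᵖ ⥤ TopCat) : C(sp X 2, sp X 1 × sp X 1) :=
  ⟨fun x => (edge X 0 x, edge X 1 x), by fun_prop⟩

/-- The third Segal map `p_3 = ⟨X(i_1), X(i_2), X(i_3)⟩ : X_3 → X_1 × X_1 × X_1`. -/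
def segal3 (X : SimplexCategoryᵒᵖ ⥤ TopCat) : C(sp X 3, sp X 1 × sp X 1 × sp X 1) :=
  ⟨fun x => (edge X 0 x, edge X 1 x, edge X 2 x), by fun_prop⟩

/-- `g` is a homotopy inverse of `f`. -/
def IsHomotopyInverse {A B : Type*} [TopologicalSpace A] [TopologicalSpace B]
    (f : C(A, B)) (g : C(B, A)) : Prop :=
  (f.comp g).Homotopic (ContinuousMap.id B) ∧ (g.comp f).Homotopic (ContinuousMap.id A)

/-- The continuous map `f` is a homotopy equivalence. -/
def IsHomotopyEquiv {A B : Type*} [TopologicalSpace A] [TopologicalSpace B]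
    (f : C(A, B)) : Prop :=
  ∃ g : C(B, A), IsHomotopyInverse f g

-- auxiliary
lemma Xcomp (X : SimplexCategoryᵒᵖ ⥤ TopCat) {a b c : SimplexCategory}
    (f : a ⟶ b) (g : b ⟶ c) :
    ContinuousMap.comp (X.map f.op).hom (X.map g.op).hom = (X.map (f ≫ g).op).hom := by
  rw [op_comp, X.map_comp]; rfl

lemma Xmap_congr (X : SimplexCategoryᵒᵖ ⥤ TopCat) {a c : SimplexCategory}
    {h h' : a ⟶ c} (w : h = h') : (X.map h.op).hom = (X.map h'.op).hom := by rw [w]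

lemma Xid (X : SimplexCategoryᵒᵖ ⥤ TopCat) (n : ℕ) :
    (X.map (𝟙 (SimplexCategory.mk n)).op).hom = ContinuousMap.id (sp X n) := by
  rw [op_id, X.map_id]; rfl

lemma ContinuousMap.Homotopic.hcomp {X Y Z : Type*} [TopologicalSpace X] [TopologicalSpace Y]
    [TopologicalSpace Z] {f₀ f₁ : C(X, Y)} {g₀ g₁ : C(Y, Z)} (h₀ : f₀.Homotopic f₁)
    (h₁ : g₀.Homotopic g₁) : (g₀.comp f₀).Homotopic (g₁.comp f₁) :=
  ContinuousMap.Homotopic.comp h₁ h₀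

-- contractibility of X_0
lemma contr (X : SimplexCategoryᵒᵖ ⥤ TopCat) (h0 : IsHomotopyEquiv (segalPi X 0))
    {A : Type*} [TopologicalSpace A] (f g : C(A, sp X 0)) : f.Homotopic g := by
  obtain ⟨g0, -, h2⟩ := h0
  set c : sp X 0 := g0 (fun j => j.elim0) with hc
  have hconst : g0.comp (segalPi X 0) = ContinuousMap.const (sp X 0) c := by
    ext x
    show g0 (segalPi X 0 x) = g0 (fun j => j.elim0)
    congr 1
    funext j; exact j.elim0
  have hid : (ContinuousMap.id (sp X 0)).Homotopic (ContinuousMap.const (sp X 0) c) := by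
    rw [← hconst]; exact h2.symm
  have key : ∀ f : C(A, sp X 0), f.Homotopic (ContinuousMap.const A c) := by
    intro f
    have := ContinuousMap.Homotopic.hcomp (ContinuousMap.Homotopic.refl f) hid
    simpa [ContinuousMap.id_comp, ContinuousMap.const_comp] using this
  exact (key f).trans (key g).symm

/-- Segal's Lemma 3.1: if all Segal maps are homotopy equivalences then `X_1` is a
homotopy associative H-space with multiplication `μ = d_1^2 ∘ q` and unit `∗ = s_0^1 x₀`. -/
theorem segal_lemma_3_1 (X : SimplexCategoryᵒᵖ ⥤ TopCat)
    (h0 : IsHomotopyEquiv (segalPi X 0))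
    (hm : ∀ m : ℕ, 1 ≤ m → IsHomotopyEquiv (segalPi X m))
    (x₀ : sp X 0) (q : C(sp X 1 × sp X 1, sp X 2))
    (hq : IsHomotopyInverse (segal2 X) q)
    (star : sp X 1) (hstar : star = degen X 0 x₀)
    (μ : C(sp X 1 × sp X 1, sp X 1)) (hμ : μ = (face X 1).comp q) :
    -- `x ↦ μ(x, ∗)` is homotopic to the identity
    (μ.comp ⟨fun x => (x, star), by fun_prop⟩).Homotopic (ContinuousMap.id (sp X 1)) ∧
    -- `x ↦ μ(∗, x)` is homotopic to the identity
    (μ.comp ⟨fun x => (star, x), by fun_prop⟩).Homotopic (ContinuousMap.id (sp X 1)) ∧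
    -- `μ ∘ (μ × id)` is homotopic to `μ ∘ (id × μ)` as maps `X_1 × X_1 × X_1 → X_1`
    ((μ.comp (μ.prodMap (ContinuousMap.id (sp X 1)))).comp
        ((Homeomorph.prodAssoc (sp X 1) (sp X 1) (sp X 1)).symm :
          C(sp X 1 × sp X 1 × sp X 1, (sp X 1 × sp X 1) × sp X 1))).Homotopic
      (μ.comp ((ContinuousMap.id (sp X 1)).prodMap μ)) := by
  obtain ⟨hq1, hq2⟩ := hq
  -- key: d₁ ∘ q ∘ segal2 ≃ d₁
  have keyH : ∀ {B : TopCat} (w : C(B, sp X 2)),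
      (((face X 1).comp q).comp ((segal2 X).comp w)).Homotopic ((face X 1).comp w) := by
    intro B w
    have := ContinuousMap.Homotopic.hcomp (ContinuousMap.Homotopic.refl w)
      (ContinuousMap.Homotopic.hcomp hq2 (ContinuousMap.Homotopic.refl (face X 1)))
    simpa [ContinuousMap.comp_assoc, ContinuousMap.comp_id] using this
  -- the simplicial identities we need
  have sid : ∀ {a b c : SimplexCategory} (f : a ⟶ b) (g : b ⟶ c) (h : a ⟶ c),
      f ≫ g = h → (X.map f.op).hom.comp (X.map g.op).hom = (X.map h.op).hom := by
    intro a b c f g h w; rw [Xcomp, w]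
  -- contractibility: any map into X_0 is homotopic to const x₀
  have hcontr : ∀ (f : C(sp X 1, sp X 0)), f.Homotopic (ContinuousMap.const _ x₀) :=
    fun f => contr X h0 f _
  -- ### unit lemmas
  have e0s1 : (edge X (0 : Fin 2)).comp (degen X (1 : Fin 2)) = ContinuousMap.id (sp X 1) := by
    rw [edge, degen, sid _ _ (𝟙 _) (by apply SimplexCategory.Hom.ext; ext x; fin_cases x <;> rfl),
      Xid]
  have e1s1 : (edge X (1 : Fin 2)).comp (degen X (1 : Fin 2))
      = (degen X (0 : Fin 1)).comp (face X (0 : Fin 2)) := by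
    rw [edge, degen, degen, face, Xcomp, Xcomp]
    exact Xmap_congr X (by apply SimplexCategory.Hom.ext; ext x; fin_cases x <;> rfl)
  have d1s1 : (face X (1 : Fin 3)).comp (degen X (1 : Fin 2)) = ContinuousMap.id (sp X 1) := by
    rw [face, degen, sid _ _ (𝟙 _) (by apply SimplexCategory.Hom.ext; ext x; fin_cases x <;> rfl),
      Xid]
  have e1s0 : (edge X (1 : Fin 2)).comp (degen X (0 : Fin 2)) = ContinuousMap.id (sp X 1) := by
    rw [edge, degen, sid _ _ (𝟙 _) (by apply SimplexCategory.Hom.ext; ext x; fin_cases x <;> rfl),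
      Xid]
  have e0s0 : (edge X (0 : Fin 2)).comp (degen X (0 : Fin 2))
      = (degen X (0 : Fin 1)).comp (face X (1 : Fin 2)) := by
    rw [edge, degen, degen, face, Xcomp, Xcomp]
    exact Xmap_congr X (by apply SimplexCategory.Hom.ext; ext x; fin_cases x <;> rfl)
  have d1s0 : (face X (1 : Fin 3)).comp (degen X (0 : Fin 2)) = ContinuousMap.id (sp X 1) := by
    rw [face, degen, sid _ _ (𝟙 _) (by apply SimplexCategory.Hom.ext; ext x; fin_cases x <;> rfl),
      Xid]
  -- degeneracy composed with contractible map is homotopic to const star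
  have hdface : ∀ (i : Fin 2), ((degen X (0 : Fin 1)).comp (face X i)).Homotopic
      (ContinuousMap.const (sp X 1) star) := by
    intro i
    have := ContinuousMap.Homotopic.hcomp (hcontr (face X i))
      (ContinuousMap.Homotopic.refl (degen X (0 : Fin 1)))
    simpa [ContinuousMap.comp_const, hstar] using this
  -- right unit
  have runit : (μ.comp (⟨fun x => (x, star), by fun_prop⟩ : C(sp X 1, sp X 1 × sp X 1))).Homotopic
      (ContinuousMap.id (sp X 1)) := by
    have hpair : ((segal2 X).comp (degen X (1 : Fin 2))).Homotopic
        (⟨fun x => (x, star), by fun_prop⟩ : C(sp X 1, sp X 1 × sp X 1)) := by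
      have heq : (segal2 X).comp (degen X (1 : Fin 2)) =
          ContinuousMap.prodMk ((edge X (0 : Fin 2)).comp (degen X (1 : Fin 2)))
            ((edge X (1 : Fin 2)).comp (degen X (1 : Fin 2))) := by
        ext x <;> rfl
      rw [heq, e0s1, e1s1]
      obtain ⟨H⟩ := hdface 0
      exact ⟨(ContinuousMap.Homotopy.refl _).prod H⟩
    have := ContinuousMap.Homotopic.hcomp hpair.symm (ContinuousMap.Homotopic.refl μ)
    refine ContinuousMap.Homotopic.trans this ?_
    rw [hμ]
    exact (keyH (degen X (1 : Fin 2))).trans (by rw [d1s1])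
  have lunit : (μ.comp (⟨fun x => (star, x), by fun_prop⟩ : C(sp X 1, sp X 1 × sp X 1))).Homotopic
      (ContinuousMap.id (sp X 1)) := by
    have hpair : ((segal2 X).comp (degen X (0 : Fin 2))).Homotopic
        (⟨fun x => (star, x), by fun_prop⟩ : C(sp X 1, sp X 1 × sp X 1)) := by
      have heq : (segal2 X).comp (degen X (0 : Fin 2)) =
          ContinuousMap.prodMk ((edge X (0 : Fin 2)).comp (degen X (0 : Fin 2)))
            ((edge X (1 : Fin 2)).comp (degen X (0 : Fin 2))) := by
        ext x <;> rfl
      rw [heq, e0s0, e1s0]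
      obtain ⟨H⟩ := hdface 1
      exact ⟨H.prod (ContinuousMap.Homotopy.refl _)⟩
    have := ContinuousMap.Homotopic.hcomp hpair.symm (ContinuousMap.Homotopic.refl μ)
    refine ContinuousMap.Homotopic.trans this ?_
    rw [hμ]
    exact (keyH (degen X (0 : Fin 2))).trans (by rw [d1s0])
  refine ⟨runit, lunit, ?_⟩
  -- ### associativity
  -- simplicial identities at level 3
  have pairA : (segal2 X).comp (face X (3 : Fin 4)) =
      ContinuousMap.prodMk (edge X (0 : Fin 3)) (edge X (1 : Fin 3)) := by
    have h1 : (edge X (0 : Fin 2)).comp (face X (3 : Fin 4)) = edge X (0 : Fin 3) := by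
      rw [edge, edge, face, Xcomp]
      exact Xmap_congr X (by apply SimplexCategory.Hom.ext; ext x; fin_cases x <;> rfl)
    have h2 : (edge X (1 : Fin 2)).comp (face X (3 : Fin 4)) = edge X (1 : Fin 3) := by
      rw [edge, edge, face, Xcomp]
      exact Xmap_congr X (by apply SimplexCategory.Hom.ext; ext x; fin_cases x <;> rfl)
    ext w
    · exact DFunLike.congr_fun h1 w
    · exact DFunLike.congr_fun h2 w
  have pairB : (segal2 X).comp (face X (0 : Fin 4)) =
      ContinuousMap.prodMk (edge X (1 : Fin 3)) (edge X (2 : Fin 3)) := by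
    have h1 : (edge X (0 : Fin 2)).comp (face X (0 : Fin 4)) = edge X (1 : Fin 3) := by
      rw [edge, edge, face, Xcomp]
      exact Xmap_congr X (by apply SimplexCategory.Hom.ext; ext x; fin_cases x <;> rfl)
    have h2 : (edge X (1 : Fin 2)).comp (face X (0 : Fin 4)) = edge X (2 : Fin 3) := by
      rw [edge, edge, face, Xcomp]
      exact Xmap_congr X (by apply SimplexCategory.Hom.ext; ext x; fin_cases x <;> rfl)
    ext w
    · exact DFunLike.congr_fun h1 w
    · exact DFunLike.congr_fun h2 w
  have pairC : (segal2 X).comp (face X (1 : Fin 4)) =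
      ContinuousMap.prodMk ((face X (1 : Fin 3)).comp (face X (3 : Fin 4))) (edge X (2 : Fin 3)) := by
    have h1 : (edge X (0 : Fin 2)).comp (face X (1 : Fin 4))
        = (face X (1 : Fin 3)).comp (face X (3 : Fin 4)) := by
      rw [edge, face, face, face, Xcomp, Xcomp]
      exact Xmap_congr X (by apply SimplexCategory.Hom.ext; ext x; fin_cases x <;> rfl)
    have h2 : (edge X (1 : Fin 2)).comp (face X (1 : Fin 4)) = edge X (2 : Fin 3) := by
      rw [edge, edge, face, Xcomp]
      exact Xmap_congr X (by apply SimplexCategory.Hom.ext; ext x; fin_cases x <;> rfl)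
    ext w
    · exact DFunLike.congr_fun h1 w
    · exact DFunLike.congr_fun h2 w
  have pairD : (segal2 X).comp (face X (2 : Fin 4)) =
      ContinuousMap.prodMk (edge X (0 : Fin 3)) ((face X (1 : Fin 3)).comp (face X (0 : Fin 4))) := by
    have h1 : (edge X (0 : Fin 2)).comp (face X (2 : Fin 4)) = edge X (0 : Fin 3) := by
      rw [edge, edge, face, Xcomp]
      exact Xmap_congr X (by apply SimplexCategory.Hom.ext; ext x; fin_cases x <;> rfl)
    have h2 : (edge X (1 : Fin 2)).comp (face X (2 : Fin 4))
        = (face X (1 : Fin 3)).comp (face X (0 : Fin 4)) := by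
      rw [edge, face, face, face, Xcomp, Xcomp]
      exact Xmap_congr X (by apply SimplexCategory.Hom.ext; ext x; fin_cases x <;> rfl)
    ext w
    · exact DFunLike.congr_fun h1 w
    · exact DFunLike.congr_fun h2 w
  have Ldiag : (face X (1 : Fin 3)).comp (face X (1 : Fin 4))
      = (face X (1 : Fin 3)).comp (face X (2 : Fin 4)) := by
    rw [face, face, face, Xcomp, Xcomp]
    exact Xmap_congr X (by apply SimplexCategory.Hom.ext; ext x; fin_cases x <;> rfl)
  -- abbreviations
  set A : C(sp X 1 × sp X 1 × sp X 1, sp X 1) :=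
    (μ.comp (μ.prodMap (ContinuousMap.id (sp X 1)))).comp
      ((Homeomorph.prodAssoc (sp X 1) (sp X 1) (sp X 1)).symm :
          C(sp X 1 × sp X 1 × sp X 1, (sp X 1 × sp X 1) × sp X 1)) with hA
  set B : C(sp X 1 × sp X 1 × sp X 1, sp X 1) :=
    μ.comp ((ContinuousMap.id (sp X 1)).prodMap μ) with hB
  -- A ∘ segal3 ≃ d₁ ∘ d₁
  have stepA : (A.comp (segal3 X)).Homotopic ((face X (1 : Fin 3)).comp (face X (1 : Fin 4))) := by
    have hAσ : A.comp (segal3 X) = μ.comp (ContinuousMap.prodMk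
        (μ.comp ((segal2 X).comp (face X (3 : Fin 4)))) (edge X (2 : Fin 3))) := by
      rw [pairA]; ext w; rfl
    have s1 : (μ.comp ((segal2 X).comp (face X (3 : Fin 4)))).Homotopic
        ((face X (1 : Fin 3)).comp (face X (3 : Fin 4))) := by
      rw [hμ]; exact keyH (face X (3 : Fin 4))
    obtain ⟨H1⟩ := s1
    have s2 : (ContinuousMap.prodMk (μ.comp ((segal2 X).comp (face X (3 : Fin 4))))
          (edge X (2 : Fin 3))).Homotopic ((segal2 X).comp (face X (1 : Fin 4))) := by
      rw [pairC]
      exact ⟨H1.prod (ContinuousMap.Homotopy.refl _)⟩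
    rw [hAσ]
    refine (ContinuousMap.Homotopic.hcomp s2 (ContinuousMap.Homotopic.refl μ)).trans ?_
    rw [hμ]; exact keyH (face X (1 : Fin 4))
  -- B ∘ segal3 ≃ d₁ ∘ d₂
  have stepB : (B.comp (segal3 X)).Homotopic ((face X (1 : Fin 3)).comp (face X (2 : Fin 4))) := by
    have hBσ : B.comp (segal3 X) = μ.comp (ContinuousMap.prodMk (edge X (0 : Fin 3))
        (μ.comp ((segal2 X).comp (face X (0 : Fin 4))))) := by
      rw [pairB]; ext w; rfl
    have s1 : (μ.comp ((segal2 X).comp (face X (0 : Fin 4)))).Homotopic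
        ((face X (1 : Fin 3)).comp (face X (0 : Fin 4))) := by
      rw [hμ]; exact keyH (face X (0 : Fin 4))
    obtain ⟨H1⟩ := s1
    have s2 : (ContinuousMap.prodMk (edge X (0 : Fin 3))
          (μ.comp ((segal2 X).comp (face X (0 : Fin 4))))).Homotopic
        ((segal2 X).comp (face X (2 : Fin 4))) := by
      rw [pairD]
      exact ⟨(ContinuousMap.Homotopy.refl _).prod H1⟩
    rw [hBσ]
    refine (ContinuousMap.Homotopic.hcomp s2 (ContinuousMap.Homotopic.refl μ)).trans ?_
    rw [hμ]; exact keyH (face X (2 : Fin 4))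
  -- homotopy inverse of segal3
  obtain ⟨g3, hg31, hg32⟩ := hm 3 (by norm_num)
  set φ : C(sp X 1 × sp X 1 × sp X 1, Fin 3 → sp X 1) :=
    ⟨fun p j => if j = 0 then p.1 else if j = 1 then p.2.1 else p.2.2, by
      refine continuous_pi fun j => ?_
      fin_cases j <;> simp <;> fun_prop⟩ with hφ
  set ψ : C((Fin 3 → sp X 1), sp X 1 × sp X 1 × sp X 1) :=
    ⟨fun f => (f 0, f 1, f 2), by fun_prop⟩ with hψ
  have hφσ : φ.comp (segal3 X) = segalPi X 3 := by
    ext w x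
    fin_cases x <;> rfl
  have hψφ : ψ.comp φ = ContinuousMap.id _ := by
    ext p <;> rfl
  have hψσ : ψ.comp (segalPi X 3) = segal3 X := by
    ext w <;> rfl
  set r : C(sp X 1 × sp X 1 × sp X 1, sp X 3) := g3.comp φ with hr
  have hr1 : ((segal3 X).comp r).Homotopic (ContinuousMap.id _) := by
    have : (segal3 X).comp r = (ψ.comp ((segalPi X 3).comp g3)).comp φ := by
      rw [← hψσ, hr]; simp [ContinuousMap.comp_assoc]
    rw [this]
    have := ContinuousMap.Homotopic.hcomp (ContinuousMap.Homotopic.refl φ)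
      (ContinuousMap.Homotopic.hcomp hg31 (ContinuousMap.Homotopic.refl ψ))
    refine this.trans ?_
    rw [ContinuousMap.comp_id, hψφ]
  have hr2 : (r.comp (segal3 X)).Homotopic (ContinuousMap.id _) := by
    have : r.comp (segal3 X) = g3.comp (segalPi X 3) := by
      rw [hr, ContinuousMap.comp_assoc, hφσ]
    rw [this]; exact hg32
  -- assemble
  have t1 : A.Homotopic ((A.comp (segal3 X)).comp r) := by
    have := ContinuousMap.Homotopic.hcomp hr1.symm (ContinuousMap.Homotopic.refl A)
    simpa [ContinuousMap.comp_id, ContinuousMap.comp_assoc] using this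
  have t2 : ((A.comp (segal3 X)).comp r).Homotopic
      (((face X (1 : Fin 3)).comp (face X (1 : Fin 4))).comp r) :=
    ContinuousMap.Homotopic.hcomp (ContinuousMap.Homotopic.refl r) stepA
  have t3 : (((face X (1 : Fin 3)).comp (face X (2 : Fin 4))).comp r).Homotopic
      ((B.comp (segal3 X)).comp r) :=
    ContinuousMap.Homotopic.hcomp (ContinuousMap.Homotopic.refl r) stepB.symm
  have t4 : ((B.comp (segal3 X)).comp r).Homotopic B := by
    have := ContinuousMap.Homotopic.hcomp hr1 (ContinuousMap.Homotopic.refl B)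
    simpa [ContinuousMap.comp_id, ContinuousMap.comp_assoc] using this
  exact t1.trans (t2.trans (by rw [Ldiag]; exact t3.trans t4))
end

section
/- Let X be a simplicial space whose space X_0 is contractible, and fix a point x₀ ∈ X_0 with ∗ = s_0^1(x₀) ∈ X_1. Then the map j₁ : X_1 → X_1 × X_1 given by j₁(x) = (x, ∗) is homotopic to p_2 ∘ s_1^2, and the map j₂ : X_1 → X_1 × X_1 given by j₂(x) = (∗, x) is homotopic to p_2 ∘ s_0^2. -/
open CategoryTheory

/-- Any two continuous maps into a contractible space are homotopic. -/
lemma myaux_homotopic_into {A Z : Type*} [TopologicalSpace A] [TopologicalSpace Z]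
    [ContractibleSpace Z] (f g : C(A, Z)) : f.Homotopic g := by
  obtain ⟨z, ⟨H⟩⟩ := id_nullhomotopic Z
  have hf : f.Homotopic (ContinuousMap.const A z) := by
    have := ContinuousMap.Homotopic.comp ⟨H⟩ (ContinuousMap.Homotopic.refl f)
    simpa using this
  have hg : g.Homotopic (ContinuousMap.const A z) := by
    have := ContinuousMap.Homotopic.comp ⟨H⟩ (ContinuousMap.Homotopic.refl g)
    simpa using this
  exact hf.trans hg.symm

/-- If `X_0` is contractible and `∗ = s_0^1 x₀`, then `j₁ = (x ↦ (x, ∗))` is homotopic to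
`p_2 ∘ s_1^2` and `j₂ = (x ↦ (∗, x))` is homotopic to `p_2 ∘ s_0^2`. -/
theorem unit_maps_factor (X : SimplexCategoryᵒᵖ ⥤ TopCat)
    (hX0 : ContractibleSpace (sp X 0))
    (x₀ : sp X 0) (star : sp X 1) (hstar : star = degen X 0 x₀) :
    (⟨fun x => (x, star), by fun_prop⟩ : C(sp X 1, sp X 1 × sp X 1)).Homotopic
      ((segal2 X).comp (degen X (1 : Fin 2))) ∧
    (⟨fun x => (star, x), by fun_prop⟩ : C(sp X 1, sp X 1 × sp X 1)).Homotopic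
      ((segal2 X).comp (degen X (0 : Fin 2))) := by
  haveI := hX0
  -- simplicial identities
  have e11 : ∀ y : sp X 1, edge X 0 (degen X (1 : Fin 2) y) = y := by
    intro y
    have e : SimplexCategory.mkOfSucc (0 : Fin 2) ≫ SimplexCategory.σ 1 =
        𝟙 (SimplexCategory.mk 1) := by
      apply SimplexCategory.Hom.ext; ext x; fin_cases x <;> rfl
    show (X.map (SimplexCategory.σ (1 : Fin 2)).op ≫
        X.map (SimplexCategory.mkOfSucc (0 : Fin 2)).op) y = y
    rw [← X.map_comp, ← op_comp, e, op_id, X.map_id]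
    rfl
  have e12 : ∀ y : sp X 1, edge X 1 (degen X (1 : Fin 2) y) = degen X 0 (face X 0 y) := by
    intro y
    have e : SimplexCategory.mkOfSucc (1 : Fin 2) ≫ SimplexCategory.σ 1 =
        SimplexCategory.σ 0 ≫ SimplexCategory.δ 0 := by
      apply SimplexCategory.Hom.ext; ext x; fin_cases x <;> rfl
    show (X.map (SimplexCategory.σ (1 : Fin 2)).op ≫
        X.map (SimplexCategory.mkOfSucc (1 : Fin 2)).op) y =
      (X.map (SimplexCategory.δ (0 : Fin 2)).op ≫ X.map (SimplexCategory.σ (0 : Fin 1)).op) y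
    rw [← X.map_comp, ← X.map_comp, ← op_comp, ← op_comp, e]
  have e01 : ∀ y : sp X 1, edge X 0 (degen X (0 : Fin 2) y) = degen X 0 (face X 1 y) := by
    intro y
    have e : SimplexCategory.mkOfSucc (0 : Fin 2) ≫ SimplexCategory.σ 0 =
        SimplexCategory.σ 0 ≫ SimplexCategory.δ 1 := by
      apply SimplexCategory.Hom.ext; ext x; fin_cases x <;> rfl
    show (X.map (SimplexCategory.σ (0 : Fin 2)).op ≫
        X.map (SimplexCategory.mkOfSucc (0 : Fin 2)).op) y =
      (X.map (SimplexCategory.δ (1 : Fin 2)).op ≫ X.map (SimplexCategory.σ (0 : Fin 1)).op) y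
    rw [← X.map_comp, ← X.map_comp, ← op_comp, ← op_comp, e]
  have e02 : ∀ y : sp X 1, edge X 1 (degen X (0 : Fin 2) y) = y := by
    intro y
    have e : SimplexCategory.mkOfSucc (1 : Fin 2) ≫ SimplexCategory.σ 0 =
        𝟙 (SimplexCategory.mk 1) := by
      apply SimplexCategory.Hom.ext; ext x; fin_cases x <;> rfl
    show (X.map (SimplexCategory.σ (0 : Fin 2)).op ≫
        X.map (SimplexCategory.mkOfSucc (1 : Fin 2)).op) y = y
    rw [← X.map_comp, ← op_comp, e, op_id, X.map_id]
    rfl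
  -- the key homotopy: degen 0 ∘ face i  ≃  const star
  have key : ∀ i : Fin 2, (ContinuousMap.const (sp X 1) star).Homotopic
      ((degen X 0).comp (face X i)) := by
    intro i
    have h0 : (face X i).Homotopic (ContinuousMap.const (sp X 1) x₀) :=
      myaux_homotopic_into _ _
    have := ContinuousMap.Homotopic.comp (ContinuousMap.Homotopic.refl (degen X (0 : Fin 1))) h0
    refine ContinuousMap.Homotopic.symm ?_
    convert this using 2
    ext y
    simp [hstar]
  constructor
  · have heq : (segal2 X).comp (degen X (1 : Fin 2)) =
        (ContinuousMap.id (sp X 1)).prodMk ((degen X 0).comp (face X 0)) := by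
      ext y
      · exact e11 y
      · exact e12 y
    rw [heq]
    have h1 : (⟨fun x => (x, star), by fun_prop⟩ : C(sp X 1, sp X 1 × sp X 1)) =
        (ContinuousMap.id (sp X 1)).prodMk (ContinuousMap.const (sp X 1) star) := rfl
    rw [h1]
    exact ContinuousMap.Homotopic.prodMk (ContinuousMap.Homotopic.refl _) (key 0)
  · have heq : (segal2 X).comp (degen X (0 : Fin 2)) =
        (((degen X 0).comp (face X 1)) : C(sp X 1, sp X 1)).prodMk (ContinuousMap.id (sp X 1)) := by
      ext y
      · exact e01 y
      · exact e02 y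
    rw [heq]
    have h1 : (⟨fun x => (star, x), by fun_prop⟩ : C(sp X 1, sp X 1 × sp X 1)) =
        (ContinuousMap.const (sp X 1) star).prodMk (ContinuousMap.id (sp X 1)) := rfl
    rw [h1]
    exact ContinuousMap.Homotopic.prodMk (key 1) (ContinuousMap.Homotopic.refl _)
end

section
/- Let X be a simplicial space such that the Segal maps p_2 : X_2 → X_1 × X_1 and p_3 : X_3 → X_1 × X_1 × X_1 are homotopy equivalences. Then ⟨d_3^3, X(i_3)⟩ : X_3 → X_2 × X_1 and ⟨X(i_1), d_0^3⟩ : X_3 → X_1 × X_2 are homotopy equivalences; moreover, for any homotopy inverse r of p_3, the map r ∘ (p_2 × id_{X_1}) is a homotopy inverse of ⟨d_3^3, X(i_3)⟩ and the map r ∘ (id_{X_1} × p_2) is a homotopy inverse of ⟨X(i_1), d_0^3⟩. -/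
open CategoryTheory

section Aux

open ContinuousMap

variable {A B C D : Type*} [TopologicalSpace A] [TopologicalSpace B]
  [TopologicalSpace C] [TopologicalSpace D]

lemma IsHomotopyInverse.prodMap {f : C(A, B)} {g : C(B, A)} {f' : C(C, D)} {g' : C(D, C)}
    (h : IsHomotopyInverse f g) (h' : IsHomotopyInverse f' g') :
    IsHomotopyInverse (f.prodMap f') (g.prodMap g') := by
  constructor
  · have := (h.1.prodMap h'.1)
    simpa [ContinuousMap.prodMap, ContinuousMap.comp, Prod.map_comp_map, ContinuousMap.id] using this
  · have := (h.2.prodMap h'.2)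
    simpa [ContinuousMap.prodMap, ContinuousMap.comp, Prod.map_comp_map, ContinuousMap.id] using this

lemma IsHomotopyInverse.compInv {f : C(A, B)} {g : C(B, A)} {f' : C(B, C)} {g' : C(C, B)}
    (h : IsHomotopyInverse f g) (h' : IsHomotopyInverse f' g') :
    IsHomotopyInverse (f'.comp f) (g.comp g') := by
  constructor
  · have step : ((f.comp g).comp g').Homotopic g' := by
      simpa using ContinuousMap.Homotopic.comp h.1 (ContinuousMap.Homotopic.refl g')
    have : (f'.comp ((f.comp g).comp g')).Homotopic (ContinuousMap.id C) :=
      (ContinuousMap.Homotopic.comp (ContinuousMap.Homotopic.refl f') step).trans h'.1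
    simpa [ContinuousMap.comp_assoc] using this
  · have step : ((g'.comp f').comp f).Homotopic f := by
      simpa using ContinuousMap.Homotopic.comp h'.2 (ContinuousMap.Homotopic.refl f)
    have : (g.comp ((g'.comp f').comp f)).Homotopic (ContinuousMap.id A) :=
      (ContinuousMap.Homotopic.comp (ContinuousMap.Homotopic.refl g) step).trans h.2
    simpa [ContinuousMap.comp_assoc] using this

lemma IsHomotopyInverse.homeomorph (e : A ≃ₜ B) :
    IsHomotopyInverse (e : C(A, B)) (e.symm : C(B, A)) := by
  constructor
  · have : (e : C(A, B)).comp (e.symm : C(B, A)) = ContinuousMap.id B := by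
      ext x; simp
    rw [this]
  · have : (e.symm : C(B, A)).comp (e : C(A, B)) = ContinuousMap.id A := by
      ext x; simp
    rw [this]

/-- Two-out-of-three: if `A` has homotopy inverse `B` and `A ∘ q` has homotopy inverse `r`,
then `r ∘ A` is a homotopy inverse of `q`. -/
lemma IsHomotopyInverse.cancel {q : C(A, B)} {F : C(B, C)} {G : C(C, B)} {r : C(C, A)}
    (hF : IsHomotopyInverse F G) (hr : IsHomotopyInverse (F.comp q) r) :
    IsHomotopyInverse q (r.comp F) := by
  constructor
  · have hq : q.Homotopic ((G.comp F).comp q) := by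
      simpa using ContinuousMap.Homotopic.comp hF.2.symm (ContinuousMap.Homotopic.refl q)
    have s1 : (q.comp (r.comp F)).Homotopic (((G.comp F).comp q).comp (r.comp F)) :=
      ContinuousMap.Homotopic.comp hq (ContinuousMap.Homotopic.refl (r.comp F))
    have heq : ((G.comp F).comp q).comp (r.comp F)
        = G.comp (((F.comp q).comp r).comp F) := by
      simp [ContinuousMap.comp_assoc]
    have s2 : (((F.comp q).comp r).comp F).Homotopic F := by
      simpa using ContinuousMap.Homotopic.comp hr.1 (ContinuousMap.Homotopic.refl F)
    have s3 : (G.comp (((F.comp q).comp r).comp F)).Homotopic (ContinuousMap.id B) :=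
      (ContinuousMap.Homotopic.comp (ContinuousMap.Homotopic.refl G) s2).trans hF.2
    exact s1.trans (heq ▸ s3)
  · have : (r.comp F).comp q = r.comp (F.comp q) := by
      rw [ContinuousMap.comp_assoc]
    rw [this]; exact hr.2

end Aux

/-- If `p_2` and `p_3` are homotopy equivalences, then `⟨d_3^3, X(i_3)⟩ : X_3 → X_2 × X_1` and
`⟨X(i_1), d_0^3⟩ : X_3 → X_1 × X_2` are homotopy equivalences; moreover, for any homotopy
inverse `r` of `p_3`, `r ∘ (p_2 × id)` is a homotopy inverse of the former and
`r ∘ (id × p_2)` of the latter (the canonical associativity homeomorphism is inserted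
where needed). -/
theorem pair_maps_homotopy_equiv (X : SimplexCategoryᵒᵖ ⥤ TopCat)
    (h2 : IsHomotopyEquiv (segal2 X)) (h3 : IsHomotopyEquiv (segal3 X)) :
    IsHomotopyEquiv
      (⟨fun x => (face X (3 : Fin 4) x, edge X 2 x), by fun_prop⟩ :
        C(sp X 3, sp X 2 × sp X 1)) ∧
    IsHomotopyEquiv
      (⟨fun x => (edge X 0 x, face X (0 : Fin 4) x), by fun_prop⟩ :
        C(sp X 3, sp X 1 × sp X 2)) ∧
    ∀ r : C(sp X 1 × sp X 1 × sp X 1, sp X 3), IsHomotopyInverse (segal3 X) r →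
      IsHomotopyInverse
        (⟨fun x => (face X (3 : Fin 4) x, edge X 2 x), by fun_prop⟩ :
          C(sp X 3, sp X 2 × sp X 1))
        ((r.comp ((Homeomorph.prodAssoc (sp X 1) (sp X 1) (sp X 1) : C(_, _)))).comp
          ((segal2 X).prodMap (ContinuousMap.id (sp X 1)))) ∧
      IsHomotopyInverse
        (⟨fun x => (edge X 0 x, face X (0 : Fin 4) x), by fun_prop⟩ :
          C(sp X 3, sp X 1 × sp X 2))
        (r.comp ((ContinuousMap.id (sp X 1)).prodMap (segal2 X))) := by
  classical
  -- functoriality, pointwise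
  have hfun : ∀ {a b c : SimplexCategory} (f : a ⟶ b) (g : b ⟶ c)
      (x : X.obj (Opposite.op c)), X.map f.op (X.map g.op x) = X.map (f ≫ g).op x := by
    intro a b c f g x
    have : X.map (f ≫ g).op = X.map g.op ≫ X.map f.op := by
      rw [op_comp, X.map_comp]
    rw [this]; rfl
  -- simplicial identities
  have c1 : SimplexCategory.mkOfSucc (0:Fin 2) ≫ SimplexCategory.δ (3:Fin 4)
      = SimplexCategory.mkOfSucc (0:Fin 3) := by ext x : 3; fin_cases x <;> rfl
  have c2 : SimplexCategory.mkOfSucc (1:Fin 2) ≫ SimplexCategory.δ (3:Fin 4)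
      = SimplexCategory.mkOfSucc (1:Fin 3) := by ext x : 3; fin_cases x <;> rfl
  have c3 : SimplexCategory.mkOfSucc (0:Fin 2) ≫ SimplexCategory.δ (0:Fin 4)
      = SimplexCategory.mkOfSucc (1:Fin 3) := by ext x : 3; fin_cases x <;> rfl
  have c4 : SimplexCategory.mkOfSucc (1:Fin 2) ≫ SimplexCategory.δ (0:Fin 4)
      = SimplexCategory.mkOfSucc (2:Fin 3) := by ext x : 3; fin_cases x <;> rfl
  have e1 : ∀ x, edge X 0 (face X (3 : Fin 4) x) = edge X 0 x := fun x => by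
    simpa [edge, face, c1] using hfun (SimplexCategory.mkOfSucc (0:Fin 2))
      (SimplexCategory.δ (3:Fin 4)) x
  have e2 : ∀ x, edge X 1 (face X (3 : Fin 4) x) = edge X 1 x := fun x => by
    simpa [edge, face, c2] using hfun (SimplexCategory.mkOfSucc (1:Fin 2))
      (SimplexCategory.δ (3:Fin 4)) x
  have e3 : ∀ x, edge X 0 (face X (0 : Fin 4) x) = edge X 1 x := fun x => by
    simpa [edge, face, c3] using hfun (SimplexCategory.mkOfSucc (0:Fin 2))
      (SimplexCategory.δ (0:Fin 4)) x
  have e4 : ∀ x, edge X 1 (face X (0 : Fin 4) x) = edge X 2 x := fun x => by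
    simpa [edge, face, c4] using hfun (SimplexCategory.mkOfSucc (1:Fin 2))
      (SimplexCategory.δ (0:Fin 4)) x
  set q1 : C(sp X 3, sp X 2 × sp X 1) :=
    ⟨fun x => (face X (3 : Fin 4) x, edge X 2 x), by fun_prop⟩ with hq1
  set q2 : C(sp X 3, sp X 1 × sp X 2) :=
    ⟨fun x => (edge X 0 x, face X (0 : Fin 4) x), by fun_prop⟩ with hq2
  set A1 : C(sp X 2 × sp X 1, sp X 1 × sp X 1 × sp X 1) :=
    ((Homeomorph.prodAssoc (sp X 1) (sp X 1) (sp X 1) : C(_, _))).comp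
      ((segal2 X).prodMap (ContinuousMap.id (sp X 1))) with hA1
  set A2 : C(sp X 1 × sp X 2, sp X 1 × sp X 1 × sp X 1) :=
    (ContinuousMap.id (sp X 1)).prodMap (segal2 X) with hA2
  have key1 : A1.comp q1 = segal3 X := by
    ext x
    · exact e1 x
    · exact e2 x
    · rfl
  have key2 : A2.comp q2 = segal3 X := by
    ext x
    · rfl
    · exact e3 x
    · exact e4 x
  obtain ⟨g2, hg2⟩ := h2
  have hA1inv : IsHomotopyInverse A1
      ((g2.prodMap (ContinuousMap.id (sp X 1))).comp
        ((Homeomorph.prodAssoc (sp X 1) (sp X 1) (sp X 1)).symm : C(_, _))) :=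
    IsHomotopyInverse.compInv
      (hg2.prodMap ⟨by simp [ContinuousMap.Homotopic.refl],
        by simp [ContinuousMap.Homotopic.refl]⟩)
      (IsHomotopyInverse.homeomorph _)
  have hA2inv : IsHomotopyInverse A2 ((ContinuousMap.id (sp X 1)).prodMap g2) :=
    IsHomotopyInverse.prodMap ⟨by simp [ContinuousMap.Homotopic.refl],
      by simp [ContinuousMap.Homotopic.refl]⟩ hg2
  have main : ∀ r : C(sp X 1 × sp X 1 × sp X 1, sp X 3), IsHomotopyInverse (segal3 X) r →
      IsHomotopyInverse q1
        ((r.comp ((Homeomorph.prodAssoc (sp X 1) (sp X 1) (sp X 1) : C(_, _)))).comp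
          ((segal2 X).prodMap (ContinuousMap.id (sp X 1)))) ∧
      IsHomotopyInverse q2 (r.comp ((ContinuousMap.id (sp X 1)).prodMap (segal2 X))) := by
    intro r hr
    constructor
    · have h := IsHomotopyInverse.cancel (q := q1) hA1inv (by rw [key1]; exact hr)
      have : (r.comp ((Homeomorph.prodAssoc (sp X 1) (sp X 1) (sp X 1) : C(_, _)))).comp
          ((segal2 X).prodMap (ContinuousMap.id (sp X 1))) = r.comp A1 := by
        rw [hA1, ContinuousMap.comp_assoc]
      rw [this]; exact h
    · exact IsHomotopyInverse.cancel (q := q2) hA2inv (by rw [key2]; exact hr)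
  obtain ⟨r0, hr0⟩ := h3
  exact ⟨⟨_, (main r0 hr0).1⟩, ⟨_, (main r0 hr0).2⟩, main⟩
end

section
/- Let X be a simplicial space such that the Segal maps p_2 and p_3 are homotopy equivalences, and let r be any homotopy inverse of p_3. Then d_1^2 × id_{X_1} is homotopic to p_2 ∘ d_1^3 ∘ r ∘ (p_2 × id_{X_1}) as continuous maps X_2 × X_1 → X_1 × X_1. -/
open CategoryTheory

-- auxiliary

lemma map_map_apply' (X : SimplexCategoryᵒᵖ ⥤ TopCat) {a b c : SimplexCategory}
    (f : a ⟶ b) (g : b ⟶ c) (x : X.obj (Opposite.op c)) :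
    X.map f.op (X.map g.op x) = X.map (f ≫ g).op x := by
  rw [op_comp, X.map_comp]; rfl

lemma map_eq' (X : SimplexCategoryᵒᵖ ⥤ TopCat) {a b b' c : SimplexCategory}
    (f : a ⟶ b) (g : b ⟶ c) (f' : a ⟶ b') (g' : b' ⟶ c) (h : f ≫ g = f' ≫ g')
    (x : X.obj (Opposite.op c)) :
    X.map f.op (X.map g.op x) = X.map f'.op (X.map g'.op x) := by
  rw [map_map_apply', map_map_apply', h]

lemma Homotopic.prodMapId' {A B C : Type*} [TopologicalSpace A] [TopologicalSpace B]
    [TopologicalSpace C] {f₀ f₁ : C(A, B)} (h : f₀.Homotopic f₁) :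
    (f₀.prodMap (ContinuousMap.id C)).Homotopic (f₁.prodMap (ContinuousMap.id C)) :=
  h.elim fun H => ⟨H.prodMap (ContinuousMap.Homotopy.refl _)⟩

/-- If `p_2` and `p_3` are homotopy equivalences and `r` is any homotopy inverse of `p_3`,
then `d_1^2 × id` is homotopic to `p_2 ∘ d_1^3 ∘ r ∘ (p_2 × id)` as maps
`X_2 × X_1 → X_1 × X_1` (the canonical associativity homeomorphism is inserted). -/
theorem face_one_times_id_homotopic (X : SimplexCategoryᵒᵖ ⥤ TopCat)
    (h2 : IsHomotopyEquiv (segal2 X)) (h3 : IsHomotopyEquiv (segal3 X))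
    (r : C(sp X 1 × sp X 1 × sp X 1, sp X 3)) (hr : IsHomotopyInverse (segal3 X) r) :
    ((face X (1 : Fin 3)).prodMap (ContinuousMap.id (sp X 1))).Homotopic
      ((segal2 X).comp ((face X (1 : Fin 4)).comp
        (r.comp (((Homeomorph.prodAssoc (sp X 1) (sp X 1) (sp X 1) : C(_, _))).comp
          ((segal2 X).prodMap (ContinuousMap.id (sp X 1))))))) := by
  obtain ⟨g2, hg2l, hg2r⟩ := h2
  set L : C(sp X 2 × sp X 1, sp X 1 × sp X 1) :=
    (face X (1 : Fin 3)).prodMap (ContinuousMap.id (sp X 1)) with hL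
  set q : C(sp X 2 × sp X 1, sp X 1 × sp X 1 × sp X 1) :=
    ((Homeomorph.prodAssoc (sp X 1) (sp X 1) (sp X 1) : C(_, _))).comp
      ((segal2 X).prodMap (ContinuousMap.id (sp X 1))) with hq
  set u : C(sp X 3, sp X 2 × sp X 1) :=
    ⟨fun x => (face X (3 : Fin 4) x, edge X 2 x), by fun_prop⟩ with hu
  set s : C(sp X 1 × sp X 1 × sp X 1, sp X 2 × sp X 1) :=
    ⟨fun p => (g2 (p.1, p.2.1), p.2.2), by fun_prop⟩ with hs
  set K : C(sp X 2 × sp X 1, sp X 2 × sp X 1) := (u.comp r).comp q with hK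
  -- hom equalities in SimplexCategory
  have e1 : SimplexCategory.mkOfSucc (0 : Fin 2) ≫ SimplexCategory.δ (3 : Fin 4)
      = SimplexCategory.mkOfSucc (0 : Fin 3) := by ext i : 3; fin_cases i <;> rfl
  have e2 : SimplexCategory.mkOfSucc (1 : Fin 2) ≫ SimplexCategory.δ (3 : Fin 4)
      = SimplexCategory.mkOfSucc (1 : Fin 3) := by ext i : 3; fin_cases i <;> rfl
  have e3 : SimplexCategory.δ (1 : Fin 3) ≫ SimplexCategory.δ (3 : Fin 4)
      = SimplexCategory.mkOfSucc (0 : Fin 2) ≫ SimplexCategory.δ (1 : Fin 4) := by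
    ext i : 3; fin_cases i <;> rfl
  have e4 : SimplexCategory.mkOfSucc (1 : Fin 2) ≫ SimplexCategory.δ (1 : Fin 4)
      = SimplexCategory.mkOfSucc (2 : Fin 3) := by ext i : 3; fin_cases i <;> rfl
  -- key map equalities
  have hqu : q.comp u = segal3 X := by
    ext x
    · exact (map_map_apply' X _ _ x).trans (by rw [e1]; rfl)
    · exact (map_map_apply' X _ _ x).trans (by rw [e2]; rfl)
    · rfl
  have hLu : L.comp u = (segal2 X).comp (face X (1 : Fin 4)) := by
    ext x
    · exact map_eq' X _ _ _ _ e3 x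
    · exact ((map_map_apply' X _ _ x).trans (by rw [e4]; rfl)).symm
  -- s is a homotopy inverse of q
  have hsq : (s.comp q).Homotopic (ContinuousMap.id _) := by
    have h1 : s.comp q = (g2.comp (segal2 X)).prodMap (ContinuousMap.id (sp X 1)) := by
      ext ⟨x, y⟩ <;> rfl
    have h2 : (ContinuousMap.id (sp X 2)).prodMap (ContinuousMap.id (sp X 1))
        = ContinuousMap.id _ := by ext ⟨x, y⟩ <;> rfl
    rw [h1, ← h2]
    exact Homotopic.prodMapId' hg2r
  -- q ∘ K ≃ q
  have hqK : (q.comp K).Homotopic q := by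
    have h1 : q.comp K = ((segal3 X).comp r).comp q := by
      rw [hK, ← hqu]; rfl
    rw [h1]
    have := ContinuousMap.Homotopic.comp hr.1 (ContinuousMap.Homotopic.refl q)
    rwa [ContinuousMap.id_comp] at this
  -- K ≃ id
  have hKid : K.Homotopic (ContinuousMap.id _) := by
    have h1 : K.Homotopic ((s.comp q).comp K) := by
      have := ContinuousMap.Homotopic.comp hsq.symm (ContinuousMap.Homotopic.refl K)
      rwa [ContinuousMap.id_comp] at this
    have h2 : ((s.comp q).comp K).Homotopic (s.comp q) := by
      have : (s.comp q).comp K = s.comp (q.comp K) := rfl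
      rw [this]
      exact ContinuousMap.Homotopic.comp (ContinuousMap.Homotopic.refl s) hqK
    exact (h1.trans h2).trans hsq
  -- conclude
  have hRHS : (segal2 X).comp ((face X (1 : Fin 4)).comp (r.comp q)) = L.comp K := by
    rw [hK, show (segal2 X).comp ((face X (1 : Fin 4)).comp (r.comp q))
      = ((segal2 X).comp (face X (1 : Fin 4))).comp (r.comp q) from rfl, ← hLu]; rfl
  rw [hRHS]
  have := ContinuousMap.Homotopic.comp (ContinuousMap.Homotopic.refl L) hKid.symm
  rwa [ContinuousMap.comp_id] at this
end
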